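/- (Dedekind–Rademacher reciprocity) Let ν₀, ν₁, ν₂ be pairwise coprime positive integers. Then S(ν₁,ν₂|ν₀) + S(ν₀,ν₂|ν₁) + S(ν₁,ν₀|ν₂) = (ν₀² + ν₁² + ν₂²)/(12 ν₀ ν₁ ν₂) − 1/4, where S(a,b|c) := Σ_{i=1}^{c−1} b₁(ia/c) b₁(ib/c) and b₁(x) = {x} − 1/2. -/

import Mathlib

noncomputable def b1 (x : ℝ) : ℝ := Int.fract x - 1/2

noncomputable def dedekindS (a b c : ℕ) : ℝ :=
  ∑ i ∈ Finset.Ico 1 c, b1 (i * a / c) * b1 (i * b / c)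

open Finset

namespace DR

/-! Integer-valued auxiliary sums. -/

def Sp (a b c : ℕ) : ℕ := ∑ i ∈ Ico 1 a, ((i*b) % a) * ((i*c) % a)
def SA (a b : ℕ) : ℕ := ∑ i ∈ Ico 1 a, i * ((i*b) / a)
def SN (a b c : ℕ) : ℕ := ∑ i ∈ Ico 1 a, ((i*b) / a) * ((i*c) / a)
def SW (a b : ℕ) : ℕ := ∑ u ∈ range (a*b), (u / b) * (u / a)

/-! Gauss sums. -/

lemma gauss1 (n : ℕ) : ∑ i ∈ range n, (i:ℝ) = n*(n-1)/2 := by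
  induction n with
  | zero => simp
  | succ n ih => rw [Finset.sum_range_succ, ih]; push_cast; ring

lemma gauss2 (n : ℕ) : ∑ i ∈ range n, (i:ℝ)^2 = n*(n-1)*(2*n-1)/6 := by
  induction n with
  | zero => simp
  | succ n ih => rw [Finset.sum_range_succ, ih]; push_cast; ring

lemma ico_range (n : ℕ) (f : ℕ → ℝ) (hf : f 0 = 0) :
    ∑ i ∈ Ico 1 n, f i = ∑ i ∈ range n, f i := by
  rcases Nat.eq_zero_or_pos n with rfl|hn
  · simp
  rw [Finset.range_eq_Ico, Finset.sum_eq_sum_Ico_succ_bot hn, hf, zero_add]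

lemma gauss1' (n : ℕ) : ∑ i ∈ Ico 1 n, (i:ℝ) = n*(n-1)/2 := by
  rw [ico_range n _ (by simp)]; exact gauss1 n

lemma gauss2' (n : ℕ) : ∑ i ∈ Ico 1 n, (i:ℝ)^2 = n*(n-1)*(2*n-1)/6 := by
  rw [ico_range n _ (by simp)]; exact gauss2 n

/-! Decomposition of a sum over `range (m*n)`. -/

lemma sum_range_mul' {M : Type*} [AddCommMonoid M] (m n : ℕ) (g : ℕ → M) :
    ∑ u ∈ range (m*n), g u = ∑ q ∈ range m, ∑ r ∈ range n, g (n*q + r) := by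
  rcases Nat.eq_zero_or_pos n with rfl|hn
  · simp
  rw [← Finset.sum_product']
  refine Finset.sum_nbij' (fun u => (u / n, u % n)) (fun p => n * p.1 + p.2) ?_ ?_ ?_ ?_ ?_
  · intro u hu
    simp only [Finset.mem_range, Finset.mem_product] at *
    exact ⟨(Nat.div_lt_iff_lt_mul hn).2 hu, Nat.mod_lt _ hn⟩
  · rintro ⟨q, r⟩ hp
    simp only [Finset.mem_range, Finset.mem_product] at *
    calc n * q + r < n * q + n := by omega
    _ = n * (q+1) := by ring
    _ ≤ n * m := Nat.mul_le_mul_left n hp.1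
    _ = m * n := Nat.mul_comm n m
  · intro u _; exact Nat.div_add_mod u n
  · rintro ⟨q, r⟩ hp
    simp only [Finset.mem_range, Finset.mem_product] at hp
    simp [Nat.mul_add_div hn, Nat.mul_add_mod, Nat.div_eq_of_lt hp.2, Nat.mod_eq_of_lt hp.2]
  · intro u _; rw [Nat.div_add_mod u n]

/-! Chinese remainder rearrangement. -/

lemma sum_crt {M : Type*} [AddCommMonoid M] {a b : ℕ} (h : Nat.Coprime a b)
    (ha : 0 < a) (hb : 0 < b) (g : ℕ → ℕ → M) :
    ∑ u ∈ range (a*b), g (u % a) (u % b) = ∑ r ∈ range a, ∑ s ∈ range b, g r s := by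
  rw [← Finset.sum_product']
  have hab : 0 < a*b := Nat.mul_pos ha hb
  refine Finset.sum_nbij' (fun u => (u % a, u % b))
    (fun p => (Nat.chineseRemainder h p.1 p.2 : ℕ) % (a*b)) ?_ ?_ ?_ ?_ ?_
  · intro u hu
    simp only [Finset.mem_range, Finset.mem_product] at *
    exact ⟨Nat.mod_lt _ ha, Nat.mod_lt _ hb⟩
  · rintro p hp
    simp only [Finset.mem_range, Finset.mem_product] at *
    exact Nat.mod_lt _ hab
  · intro u hu
    simp only [Finset.mem_range] at hu
    obtain ⟨hma, hmb⟩ := (Nat.chineseRemainder h (u % a) (u % b)).2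
    have h1 : (Nat.chineseRemainder h (u % a) (u % b) : ℕ) ≡ u [MOD a] :=
      hma.trans (Nat.mod_modEq u a)
    have h2 : (Nat.chineseRemainder h (u % a) (u % b) : ℕ) ≡ u [MOD b] :=
      hmb.trans (Nat.mod_modEq u b)
    have h3 : (Nat.chineseRemainder h (u % a) (u % b) : ℕ) ≡ u [MOD a*b] :=
      (Nat.modEq_and_modEq_iff_modEq_mul h).1 ⟨h1, h2⟩
    show (Nat.chineseRemainder h (u % a) (u % b) : ℕ) % (a*b) = u
    rw [show (Nat.chineseRemainder h (u % a) (u % b) : ℕ) % (a*b) = u % (a*b) from h3,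
      Nat.mod_eq_of_lt hu]
  · rintro ⟨r, s⟩ hp
    simp only [Finset.mem_range, Finset.mem_product] at hp
    obtain ⟨hma, hmb⟩ := (Nat.chineseRemainder h r s).2
    have e1 : ((Nat.chineseRemainder h r s : ℕ) % (a*b)) % a = r := by
      rw [Nat.mod_mod_of_dvd _ ⟨b, rfl⟩,
        show (Nat.chineseRemainder h r s : ℕ) % a = r % a from hma, Nat.mod_eq_of_lt hp.1]
    have e2 : ((Nat.chineseRemainder h r s : ℕ) % (a*b)) % b = s := by
      rw [Nat.mod_mod_of_dvd _ ⟨a, Nat.mul_comm a b⟩,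
        show (Nat.chineseRemainder h r s : ℕ) % b = s % b from hmb, Nat.mod_eq_of_lt hp.2]
    show ((_ : ℕ) % a, (_ : ℕ) % b) = (r, s)
    rw [e1, e2]
  · intro u _; rfl

/-! Basic counting lemmas. -/

lemma tie_free {a b : ℕ} (hab : Nat.Coprime a b) {i : ℕ} (h1 : 1 ≤ i) (h2 : i < a)
    (j : ℕ) : j * a ≠ i * b := by
  intro h
  have hd : a ∣ i * b := ⟨j, by rw [← h, Nat.mul_comm]⟩
  have h3 := Nat.Coprime.dvd_of_dvd_mul_right hab hd
  have := Nat.le_of_dvd (by omega) h3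
  omega

lemma div_eq_card {a b : ℕ} (hab : Nat.Coprime a b) (hb : 0 < b) {i : ℕ}
    (h1 : 1 ≤ i) (h2 : i < a) :
    (i*b)/a = ((Ico 1 b).filter (fun j => j*a < i*b)).card := by
  have ha : 0 < a := by omega
  have hub : (i*b)/a < b := Nat.div_lt_of_lt_mul ((Nat.mul_lt_mul_right hb).mpr h2)
  have hset : (Ico 1 b).filter (fun j => j*a < i*b) = Ico 1 ((i*b)/a + 1) := by
    ext j
    simp only [Finset.mem_filter, Finset.mem_Ico]
    constructor
    · rintro ⟨⟨hj1, _⟩, hlt⟩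
      have : j ≤ (i*b)/a := (Nat.le_div_iff_mul_le ha).mpr (le_of_lt hlt)
      exact ⟨hj1, by omega⟩
    · rintro ⟨hj1, hj2⟩
      have hj : j ≤ (i*b)/a := by omega
      have hle : j*a ≤ i*b := (Nat.le_div_iff_mul_le ha).mp hj
      have hne : j*a ≠ i*b := tie_free hab h1 h2 j
      exact ⟨⟨hj1, by omega⟩, lt_of_le_of_ne hle hne⟩
  rw [hset, Nat.card_Ico, Nat.add_sub_cancel]

lemma card_gt {a b : ℕ} (hb : 0 < b) (u : ℕ) :
    ((Ico 1 a).filter (fun i => u < i*b)).card = a - 1 - u/b := by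
  have hset : (Ico 1 a).filter (fun i => u < i*b) = Ico (u/b + 1) a := by
    ext i
    simp only [Finset.mem_filter, Finset.mem_Ico]
    constructor
    · rintro ⟨⟨h1, h2⟩, h3⟩
      have h4 : u/b < i := (Nat.div_lt_iff_lt_mul hb).mpr h3
      exact ⟨h4, h2⟩
    · rintro ⟨h1, h2⟩
      refine ⟨⟨?_, h2⟩, (Nat.div_lt_iff_lt_mul hb).mp h1⟩
      exact le_trans (Nat.le_add_left 1 (u/b)) h1
  rw [hset, Nat.card_Ico, Nat.sub_sub, Nat.add_comm]

/-! Permutation of residues. -/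

lemma sum_mod_perm {a b : ℕ} (hb : Nat.Coprime b a) :
    ∑ i ∈ Ico 1 a, (i*b) % a = ∑ i ∈ Ico 1 a, i := by
  rcases Nat.lt_or_ge a 2 with h|h
  · interval_cases a <;> simp
  have ha : 0 < a := by omega
  obtain ⟨b', -, hb'⟩ := Nat.exists_mul_mod_eq_one_of_coprime hb h
  have key : ∀ i, i < a → ∀ x y : ℕ, x*y % a = 1 → ((i*x % a) * y) % a = i := by
    intro i hia x y hxy
    calc ((i*x % a) * y) % a = (i*x*y) % a := by rw [Nat.mod_mul_mod]
    _ = (i*(x*y)) % a := by rw [mul_assoc]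
    _ = ((i % a) * (x*y % a)) % a := Nat.mul_mod _ _ _
    _ = i := by rw [hxy, mul_one, Nat.mod_mod_of_dvd i dvd_rfl, Nat.mod_eq_of_lt hia]
  have hb'b : b' * b % a = 1 := by rw [mul_comm]; exact hb'
  refine Finset.sum_nbij' (fun i => i*b % a) (fun j => j*b' % a) ?_ ?_ ?_ ?_ ?_
  · intro i hi
    simp only [Finset.mem_Ico] at *
    refine ⟨?_, Nat.mod_lt _ ha⟩
    by_contra hzero
    have h0 : i*b % a = 0 := by omega
    have := key i hi.2 b b' hb'
    rw [h0] at this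
    simp at this
    omega
  · intro j hj
    simp only [Finset.mem_Ico] at *
    refine ⟨?_, Nat.mod_lt _ ha⟩
    by_contra hzero
    have h0 : j*b' % a = 0 := by omega
    have := key j hj.2 b' b hb'b
    rw [h0] at this
    simp at this
    omega
  · intro i hi
    simp only [Finset.mem_Ico] at hi
    exact key i hi.2 b b' hb'
  · intro j hj
    simp only [Finset.mem_Ico] at hj
    exact key j hj.2 b' b hb'b
  · intro i _; rfl

/-! Cast helpers. -/

lemma mod_cast_eq {a : ℕ} (m : ℕ) (ha : 0 < a) :
    ((m % a : ℕ) : ℝ) = m - a * ((m / a : ℕ) : ℝ) := by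
  have h := Nat.div_add_mod m a
  have h2 : ((a * (m / a) + m % a : ℕ) : ℝ) = (m : ℝ) := by rw [h]
  push_cast at h2
  linarith

lemma div_cast_eq {a : ℕ} (u : ℕ) (ha : 0 < a) :
    ((u / a : ℕ):ℝ) * a = (u:ℝ) - ((u % a : ℕ):ℝ) := by
  rw [mod_cast_eq u ha]; ring

/-! Expansion of `Sp` in terms of `SA`, `SN`. -/

lemma Sp_expand (a b c : ℕ) (ha : 0 < a) :
    (Sp a b c : ℝ) = b*c*((a:ℝ)*((a:ℝ)-1)*(2*(a:ℝ)-1)/6) + (a:ℝ)^2*(SN a b c : ℝ)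
      - a*b*(SA a c : ℝ) - a*c*(SA a b : ℝ) := by
  have key : ∀ i : ℕ, ((i*b % a : ℕ):ℝ) * ((i*c % a : ℕ):ℝ)
      = (b:ℝ)*c*(i:ℝ)^2 + (a:ℝ)^2*((((i*b)/a : ℕ):ℝ)*(((i*c)/a : ℕ):ℝ))
        - a*b*((i:ℝ)*(((i*c)/a : ℕ):ℝ)) - a*c*((i:ℝ)*(((i*b)/a : ℕ):ℝ)) := by
    intro i
    rw [mod_cast_eq (i*b) ha, mod_cast_eq (i*c) ha]
    push_cast
    ring
  have hSN : ((SN a b c : ℕ) : ℝ)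
      = ∑ i ∈ Ico 1 a, (((i*b)/a : ℕ):ℝ) * (((i*c)/a : ℕ):ℝ) := by
    rw [SN]; push_cast; rfl
  have hSAb : ((SA a b : ℕ) : ℝ) = ∑ i ∈ Ico 1 a, (i:ℝ) * (((i*b)/a : ℕ):ℝ) := by
    rw [SA]; push_cast; rfl
  have hSAc : ((SA a c : ℕ) : ℝ) = ∑ i ∈ Ico 1 a, (i:ℝ) * (((i*c)/a : ℕ):ℝ) := by
    rw [SA]; push_cast; rfl
  have hSp : ((Sp a b c : ℕ) : ℝ)
      = ∑ i ∈ Ico 1 a, ((i*b % a : ℕ):ℝ) * ((i*c % a : ℕ):ℝ) := by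
    rw [Sp]; push_cast; rfl
  rw [hSp, hSN, hSAb, hSAc, ← gauss2' a, Finset.mul_sum, Finset.mul_sum, Finset.mul_sum,
    Finset.mul_sum, ← Finset.sum_add_distrib, ← Finset.sum_sub_distrib, ← Finset.sum_sub_distrib]
  exact Finset.sum_congr rfl fun i _ => key i

/-! The Dedekind sum in terms of `Sp`. -/

lemma ded_eq (α β γ : ℕ) (hα : 0 < α) (hβ : Nat.Coprime β α) (hγ : Nat.Coprime γ α) :
    dedekindS β γ α = (Sp α β γ : ℝ)/(α:ℝ)^2 - ((α:ℝ)-1)/4 := by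
  have hα' : (α:ℝ) ≠ 0 := Nat.cast_ne_zero.mpr (by omega)
  have hterm : ∀ i : ℕ, b1 ((i:ℝ) * β / α) * b1 ((i:ℝ) * γ / α)
      = ((i*β % α : ℕ):ℝ) * ((i*γ % α : ℕ):ℝ)/(α:ℝ)^2
        - ((i*β % α : ℕ):ℝ)/(2*α) - ((i*γ % α : ℕ):ℝ)/(2*α) + 1/4 := by
    intro i
    have e1 : ((i:ℝ) * β) = ((i*β : ℕ):ℝ) := by push_cast; ring
    have e2 : ((i:ℝ) * γ) = ((i*γ : ℕ):ℝ) := by push_cast; ring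
    rw [b1, b1, e1, e2, Int.fract_div_natCast_eq_div_natCast_mod,
      Int.fract_div_natCast_eq_div_natCast_mod]
    field_simp
    ring
  have hSf : ∀ δ : ℕ, Nat.Coprime δ α →
      ∑ i ∈ Ico 1 α, ((i*δ % α : ℕ):ℝ) = α*((α:ℝ)-1)/2 := by
    intro δ hδ
    have h1 : ∑ i ∈ Ico 1 α, ((i*δ % α : ℕ):ℝ)
        = ((∑ i ∈ Ico 1 α, (i*δ % α) : ℕ):ℝ) := by push_cast; rfl
    rw [h1, sum_mod_perm hδ]
    have h2 : ((∑ i ∈ Ico 1 α, i : ℕ):ℝ) = ∑ i ∈ Ico 1 α, (i:ℝ) := by push_cast; rfl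
    rw [h2, gauss1']
  have hSp : ((Sp α β γ : ℕ) : ℝ)
      = ∑ i ∈ Ico 1 α, ((i*β % α : ℕ):ℝ) * ((i*γ % α : ℕ):ℝ) := by
    rw [Sp]; push_cast; rfl
  rw [dedekindS, Finset.sum_congr rfl (fun i _ => hterm i), Finset.sum_add_distrib,
    Finset.sum_sub_distrib, Finset.sum_sub_distrib, ← Finset.sum_div, ← Finset.sum_div,
    ← Finset.sum_div, ← hSp, hSf β hβ, hSf γ hγ, Finset.sum_const, Nat.card_Ico]
  have hcard : ((α - 1 : ℕ):ℝ) = (α:ℝ) - 1 := by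
    rw [Nat.cast_sub (by omega)]; norm_num
  rw [nsmul_eq_mul, hcard]
  field_simp
  ring

/-! The partition (trichotomy) identity for the `SN` sums. -/

lemma SN_triple {a b c : ℕ} (hab : Nat.Coprime a b) (hac : Nat.Coprime a c)
    (hb : 0 < b) (hc : 0 < c) :
    SN a b c = ∑ i ∈ Ico 1 a, ∑ j ∈ Ico 1 b, ∑ k ∈ Ico 1 c,
      (if j*a < i*b ∧ k*a < i*c then 1 else 0) := by
  rw [SN]
  refine Finset.sum_congr rfl fun i hi => ?_
  simp only [Finset.mem_Ico] at hi
  rw [div_eq_card hab hb hi.1 hi.2, div_eq_card hac hc hi.1 hi.2,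
    Finset.card_filter, Finset.card_filter, Finset.sum_mul_sum]
  refine Finset.sum_congr rfl fun j _ => Finset.sum_congr rfl fun k _ => ?_
  by_cases h1 : j*a < i*b <;> by_cases h2 : k*a < i*c <;> simp [h1, h2]

lemma tri_one {a b c i j k : ℕ} (ha : 0 < a) (hb : 0 < b) (hc : 0 < c)
    (hab : Nat.Coprime a b) (hac : Nat.Coprime a c) (hbc : Nat.Coprime b c)
    (hi1 : 1 ≤ i) (hi2 : i < a) (hj1 : 1 ≤ j) (hj2 : j < b) (hk1 : 1 ≤ k) (hk2 : k < c) :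
    (if j*a < i*b ∧ k*a < i*c then 1 else 0) + (if i*b < j*a ∧ k*b < j*c then 1 else 0)
      + (if j*c < k*b ∧ i*c < k*a then 1 else 0) = 1 := by
  have hxy : i*b*c ≠ j*a*c := by
    intro h
    exact tie_free hab hi1 hi2 j (Nat.eq_of_mul_eq_mul_right hc h).symm
  have hxz : i*b*c ≠ k*a*b := by
    intro h
    rw [mul_right_comm i b c] at h
    exact tie_free hac hi1 hi2 k (Nat.eq_of_mul_eq_mul_right hb h).symm
  have hyz : j*a*c ≠ k*a*b := by
    intro h
    rw [mul_right_comm j a c, mul_right_comm k a b] at h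
    exact tie_free hbc hj1 hj2 k (Nat.eq_of_mul_eq_mul_right ha h).symm
  have e1 : (j*a < i*b) ↔ (j*a*c < i*b*c) := (Nat.mul_lt_mul_right hc).symm
  have e2 : (k*a < i*c) ↔ (k*a*b < i*b*c) := by
    rw [mul_right_comm i b c]; exact (Nat.mul_lt_mul_right hb).symm
  have e3 : (i*b < j*a) ↔ (i*b*c < j*a*c) := (Nat.mul_lt_mul_right hc).symm
  have e4 : (k*b < j*c) ↔ (k*a*b < j*a*c) := by
    rw [mul_right_comm k a b, mul_right_comm j a c]; exact (Nat.mul_lt_mul_right ha).symm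
  have e5 : (j*c < k*b) ↔ (j*a*c < k*a*b) := by
    rw [mul_right_comm j a c, mul_right_comm k a b]; exact (Nat.mul_lt_mul_right ha).symm
  have e6 : (i*c < k*a) ↔ (i*b*c < k*a*b) := by
    rw [mul_right_comm i b c]; exact (Nat.mul_lt_mul_right hb).symm
  simp only [e1, e2, e3, e4, e5, e6]
  generalize i*b*c = x at *
  generalize j*a*c = y at *
  generalize k*a*b = z at *
  split_ifs <;> omega

lemma partition {a b c : ℕ} (ha : 0 < a) (hb : 0 < b) (hc : 0 < c)
    (hab : Nat.Coprime a b) (hac : Nat.Coprime a c) (hbc : Nat.Coprime b c) :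
    SN a b c + SN b a c + SN c b a = (a-1)*(b-1)*(c-1) := by
  rw [SN_triple hab hac hb hc, SN_triple hab.symm hbc ha hc,
    SN_triple hbc.symm hac.symm hb ha]
  rw [show (∑ j ∈ Ico 1 b, ∑ i ∈ Ico 1 a, ∑ k ∈ Ico 1 c,
        (if i*b < j*a ∧ k*b < j*c then 1 else 0))
      = ∑ i ∈ Ico 1 a, ∑ j ∈ Ico 1 b, ∑ k ∈ Ico 1 c,
        (if i*b < j*a ∧ k*b < j*c then 1 else 0) from Finset.sum_comm]
  rw [show (∑ k ∈ Ico 1 c, ∑ j ∈ Ico 1 b, ∑ i ∈ Ico 1 a,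
        (if j*c < k*b ∧ i*c < k*a then 1 else 0))
      = ∑ i ∈ Ico 1 a, ∑ j ∈ Ico 1 b, ∑ k ∈ Ico 1 c,
        (if j*c < k*b ∧ i*c < k*a then 1 else 0) from by
    rw [Finset.sum_comm]
    rw [show (∑ j ∈ Ico 1 b, ∑ k ∈ Ico 1 c, ∑ i ∈ Ico 1 a,
          (if j*c < k*b ∧ i*c < k*a then 1 else 0))
        = ∑ j ∈ Ico 1 b, ∑ i ∈ Ico 1 a, ∑ k ∈ Ico 1 c,
          (if j*c < k*b ∧ i*c < k*a then 1 else 0) from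
      Finset.sum_congr rfl fun j _ => Finset.sum_comm]
    exact Finset.sum_comm]
  simp only [← Finset.sum_add_distrib]
  have hone : ∀ i ∈ Ico 1 a, ∀ j ∈ Ico 1 b, ∀ k ∈ Ico 1 c,
      ((if j*a < i*b ∧ k*a < i*c then 1 else 0) + (if i*b < j*a ∧ k*b < j*c then 1 else 0)
        + (if j*c < k*b ∧ i*c < k*a then 1 else 0)) = 1 := by
    intro i hi j hj k hk
    simp only [Finset.mem_Ico] at hi hj hk
    exact tri_one ha hb hc hab hac hbc hi.1 hi.2 hj.1 hj.2 hk.1 hk.2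
  rw [Finset.sum_congr rfl fun i hi => Finset.sum_congr rfl fun j hj =>
    Finset.sum_congr rfl fun k hk => hone i hi j hj k hk]
  simp [Nat.card_Ico, mul_assoc]

/-! The pair lemma. -/

lemma min_card {n x y : ℕ} (hx : x ≤ n) (hy : y ≤ n) :
    min x y = ∑ u ∈ range n, (if u < x ∧ u < y then 1 else 0) := by
  rw [← Finset.card_filter]
  have hset : (range n).filter (fun u => u < x ∧ u < y) = range (min x y) := by
    ext u
    simp only [Finset.mem_filter, Finset.mem_range]
    omega
  rw [hset, Finset.card_range]

lemma sa_ite {a b : ℕ} (ha : 0 < a) (hb : 0 < b) (hab : Nat.Coprime a b) :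
    b * SA a b = ∑ i ∈ Ico 1 a, ∑ j ∈ Ico 1 b, (if j*a < i*b then i*b else 0) := by
  rw [SA, Finset.mul_sum]
  refine Finset.sum_congr rfl fun i hi => ?_
  simp only [Finset.mem_Ico] at hi
  rw [div_eq_card hab hb hi.1 hi.2, Finset.card_filter, Finset.mul_sum, Finset.mul_sum]
  refine Finset.sum_congr rfl fun j _ => ?_
  split_ifs <;> simp [mul_comm]

lemma pairN {a b : ℕ} (ha : 0 < a) (hb : 0 < b) (hab : Nat.Coprime a b) :
    b * SA a b + a * SA b a + (∑ i ∈ Ico 1 a, ∑ j ∈ Ico 1 b, min (i*b) (j*a))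
      = ∑ i ∈ Ico 1 a, ∑ j ∈ Ico 1 b, (i*b + j*a) := by
  rw [sa_ite ha hb hab, sa_ite hb ha hab.symm]
  rw [show (∑ j ∈ Ico 1 b, ∑ i ∈ Ico 1 a, (if i*b < j*a then j*a else 0))
      = ∑ i ∈ Ico 1 a, ∑ j ∈ Ico 1 b, (if i*b < j*a then j*a else 0) from Finset.sum_comm]
  simp only [← Finset.sum_add_distrib]
  refine Finset.sum_congr rfl fun i hi => Finset.sum_congr rfl fun j hj => ?_
  simp only [Finset.mem_Ico] at hi hj
  have hne : j*a ≠ i*b := tie_free hab hi.1 hi.2 j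
  split_ifs <;> omega

lemma min_sum_eq {a b : ℕ} (ha : 0 < a) (hb : 0 < b) :
    (∑ i ∈ Ico 1 a, ∑ j ∈ Ico 1 b, min (i*b) (j*a))
      = ∑ u ∈ range (a*b), (a - 1 - u/b) * (b - 1 - u/a) := by
  have hminc : ∀ i ∈ Ico 1 a, ∀ j ∈ Ico 1 b,
      min (i*b) (j*a) = ∑ u ∈ range (a*b), (if u < i*b ∧ u < j*a then 1 else 0) := by
    intro i hi j hj
    simp only [Finset.mem_Ico] at hi hj
    refine min_card ?_ ?_
    · exact Nat.mul_le_mul_right b (by omega)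
    · calc j*a ≤ b*a := Nat.mul_le_mul_right a (by omega)
      _ = a*b := Nat.mul_comm b a
  rw [Finset.sum_congr rfl fun i hi => Finset.sum_congr rfl fun j hj => hminc i hi j hj]
  rw [show (∑ i ∈ Ico 1 a, ∑ j ∈ Ico 1 b, ∑ u ∈ range (a*b),
        (if u < i*b ∧ u < j*a then 1 else 0))
      = ∑ u ∈ range (a*b), ∑ i ∈ Ico 1 a, ∑ j ∈ Ico 1 b,
        (if u < i*b ∧ u < j*a then 1 else 0) from by
    rw [show (∑ i ∈ Ico 1 a, ∑ j ∈ Ico 1 b, ∑ u ∈ range (a*b),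
          (if u < i*b ∧ u < j*a then 1 else 0))
        = ∑ i ∈ Ico 1 a, ∑ u ∈ range (a*b), ∑ j ∈ Ico 1 b,
          (if u < i*b ∧ u < j*a then 1 else 0) from
      Finset.sum_congr rfl fun i _ => Finset.sum_comm]
    exact Finset.sum_comm]
  refine Finset.sum_congr rfl fun u hu => ?_
  have hsplit : ∀ i j : ℕ, (if u < i*b ∧ u < j*a then 1 else 0)
      = (if u < i*b then 1 else 0) * (if u < j*a then 1 else 0) := by
    intro i j
    by_cases h1 : u < i*b <;> by_cases h2 : u < j*a <;> simp [h1, h2]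
  rw [Finset.sum_congr rfl fun i _ => Finset.sum_congr rfl fun j _ => hsplit i j]
  rw [show (∑ i ∈ Ico 1 a, ∑ j ∈ Ico 1 b,
        (if u < i*b then 1 else 0) * (if u < j*a then 1 else 0))
      = (∑ i ∈ Ico 1 a, (if u < i*b then 1 else 0))
        * (∑ j ∈ Ico 1 b, (if u < j*a then 1 else 0)) from (Finset.sum_mul_sum _ _ _ _).symm]
  rw [← Finset.card_filter, ← Finset.card_filter, card_gt hb u, card_gt ha u]

/-! Sums of floors over a full period. -/

lemma sum_div_cast {a b : ℕ} (ha : 0 < a) :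
    ∑ u ∈ range (a*b), ((u/a : ℕ):ℝ) = a*(b:ℝ)*((b:ℝ)-1)/2 := by
  rw [show a*b = b*a from Nat.mul_comm a b, sum_range_mul' b a]
  have h1 : ∀ q r : ℕ, r < a → (((a*q + r)/a : ℕ):ℝ) = (q:ℝ) := by
    intro q r hr
    rw [Nat.mul_add_div ha, Nat.div_eq_of_lt hr, Nat.add_zero]
  calc ∑ q ∈ range b, ∑ r ∈ range a, (((a*q + r)/a : ℕ):ℝ)
      = ∑ q ∈ range b, ∑ r ∈ range a, (q:ℝ) := by
        refine Finset.sum_congr rfl fun q _ => Finset.sum_congr rfl fun r hr => ?_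
        exact h1 q r (Finset.mem_range.1 hr)
    _ = ∑ q ∈ range b, (a:ℝ)*(q:ℝ) := by
        refine Finset.sum_congr rfl fun q _ => ?_
        rw [Finset.sum_const, Finset.card_range, nsmul_eq_mul]
    _ = (a:ℝ) * ∑ q ∈ range b, (q:ℝ) := by rw [Finset.mul_sum]
    _ = a*(b:ℝ)*((b:ℝ)-1)/2 := by rw [gauss1]; ring

lemma sum_mul_mod_cast {a b : ℕ} (ha : 0 < a) :
    ∑ u ∈ range (a*b), (u:ℝ)*((u % a : ℕ):ℝ)
      = (a:ℝ)^2*((a:ℝ)-1)/2*((b:ℝ)*((b:ℝ)-1)/2) + (b:ℝ)*((a:ℝ)*((a:ℝ)-1)*(2*(a:ℝ)-1)/6) := by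
  rw [show a*b = b*a from Nat.mul_comm a b, sum_range_mul' b a]
  have h1 : ∀ q, ∀ r < a, ((a*q + r : ℕ):ℝ)*(((a*q + r) % a : ℕ):ℝ)
      = (a:ℝ)*(q:ℝ)*(r:ℝ) + (r:ℝ)^2 := by
    intro q r hr
    rw [Nat.mul_add_mod, Nat.mod_eq_of_lt hr]
    push_cast
    ring
  calc ∑ q ∈ range b, ∑ r ∈ range a, ((a*q + r : ℕ):ℝ)*(((a*q + r) % a : ℕ):ℝ)
      = ∑ q ∈ range b, ∑ r ∈ range a, ((a:ℝ)*(q:ℝ)*(r:ℝ) + (r:ℝ)^2) := by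
        refine Finset.sum_congr rfl fun q _ => Finset.sum_congr rfl fun r hr => ?_
        exact h1 q r (Finset.mem_range.1 hr)
    _ = ∑ q ∈ range b, ((a:ℝ)*(q:ℝ)*((a:ℝ)*((a:ℝ)-1)/2) + (a:ℝ)*((a:ℝ)-1)*(2*(a:ℝ)-1)/6) := by
        refine Finset.sum_congr rfl fun q _ => ?_
        rw [Finset.sum_add_distrib, gauss2, ← Finset.mul_sum, gauss1]
    _ = _ := by
        rw [Finset.sum_add_distrib, Finset.sum_const, Finset.card_range, nsmul_eq_mul,
          ← Finset.sum_mul, ← Finset.mul_sum, gauss1]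
        ring

lemma sum_mod_mod_cast {a b : ℕ} (hab : Nat.Coprime a b) (ha : 0 < a) (hb : 0 < b) :
    ∑ u ∈ range (a*b), ((u % a : ℕ):ℝ)*((u % b : ℕ):ℝ)
      = ((a:ℝ)*((a:ℝ)-1)/2) * ((b:ℝ)*((b:ℝ)-1)/2) := by
  rw [sum_crt hab ha hb (fun r s => (r:ℝ)*(s:ℝ))]
  calc ∑ r ∈ range a, ∑ s ∈ range b, (r:ℝ)*(s:ℝ)
      = ∑ r ∈ range a, (r:ℝ) * ∑ s ∈ range b, (s:ℝ) := by
        refine Finset.sum_congr rfl fun r _ => ?_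
        rw [Finset.mul_sum]
    _ = (∑ r ∈ range a, (r:ℝ)) * ∑ s ∈ range b, (s:ℝ) := by rw [← Finset.sum_mul]
    _ = _ := by rw [gauss1, gauss1]

lemma SW_closed {a b : ℕ} (hab : Nat.Coprime a b) (ha : 0 < a) (hb : 0 < b) :
    (SW a b : ℝ) * ((a:ℝ)*(b:ℝ))
      = ((a:ℝ)*(b:ℝ))*((a:ℝ)*(b:ℝ)-1)*(2*((a:ℝ)*(b:ℝ))-1)/6
        - ((a:ℝ)^2*((a:ℝ)-1)/2*((b:ℝ)*((b:ℝ)-1)/2) + (b:ℝ)*((a:ℝ)*((a:ℝ)-1)*(2*(a:ℝ)-1)/6))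
        - ((b:ℝ)^2*((b:ℝ)-1)/2*((a:ℝ)*((a:ℝ)-1)/2) + (a:ℝ)*((b:ℝ)*((b:ℝ)-1)*(2*(b:ℝ)-1)/6))
        + ((a:ℝ)*((a:ℝ)-1)/2) * ((b:ℝ)*((b:ℝ)-1)/2) := by
  have hSW : (SW a b : ℝ) = ∑ u ∈ range (a*b), ((u/b : ℕ):ℝ) * ((u/a : ℕ):ℝ) := by
    rw [SW]; push_cast; rfl
  have key : ∀ u : ℕ, ((u/b : ℕ):ℝ) * ((u/a : ℕ):ℝ) * ((a:ℝ)*(b:ℝ))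
      = (u:ℝ)^2 - (u:ℝ)*((u % a : ℕ):ℝ) - ((u % b : ℕ):ℝ)*(u:ℝ)
        + ((u % a : ℕ):ℝ)*((u % b : ℕ):ℝ) := by
    intro u
    have e1 := div_cast_eq u ha
    have e2 := div_cast_eq u hb
    calc ((u/b : ℕ):ℝ) * ((u/a : ℕ):ℝ) * ((a:ℝ)*(b:ℝ))
        = (((u/b : ℕ):ℝ) * b) * (((u/a : ℕ):ℝ) * a) := by ring
      _ = ((u:ℝ) - ((u % b : ℕ):ℝ)) * ((u:ℝ) - ((u % a : ℕ):ℝ)) := by rw [e1, e2]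
      _ = _ := by ring
  rw [hSW, Finset.sum_mul]
  rw [Finset.sum_congr rfl fun u _ => key u]
  rw [Finset.sum_add_distrib, Finset.sum_sub_distrib, Finset.sum_sub_distrib]
  have h2 : ∑ u ∈ range (a*b), ((u % b : ℕ):ℝ)*(u:ℝ)
      = ∑ u ∈ range (b*a), (u:ℝ)*((u % b : ℕ):ℝ) := by
    rw [show b*a = a*b from Nat.mul_comm b a]
    exact Finset.sum_congr rfl fun u _ => by ring
  have h3 : ∑ u ∈ range (a*b), ((u % a : ℕ):ℝ)*((u % b : ℕ):ℝ)
      = ((a:ℝ)*((a:ℝ)-1)/2) * ((b:ℝ)*((b:ℝ)-1)/2) := sum_mod_mod_cast hab ha hb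
  rw [gauss2 (a*b), sum_mul_mod_cast ha, h2, sum_mul_mod_cast hb, h3]
  push_cast
  ring

lemma min_sum_cast {a b : ℕ} (ha : 0 < a) (hb : 0 < b) :
    ((∑ u ∈ range (a*b), (a - 1 - u/b) * (b - 1 - u/a) : ℕ):ℝ) = (SW a b : ℝ) := by
  have hc : ∀ u ∈ range (a*b), (((a - 1 - u/b) * (b - 1 - u/a) : ℕ):ℝ)
      = ((a:ℝ) - 1 - ((u/b : ℕ):ℝ)) * ((b:ℝ) - 1 - ((u/a : ℕ):ℝ)) := by
    intro u hu
    rw [Finset.mem_range] at hu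
    have h1 : u/b ≤ a - 1 := by
      have := (Nat.div_lt_iff_lt_mul hb).mpr hu
      omega
    have h2 : u/a ≤ b - 1 := by
      have := (Nat.div_lt_iff_lt_mul ha).mpr (show u < b*a by rw [Nat.mul_comm b a]; exact hu)
      omega
    rw [Nat.cast_mul, Nat.cast_sub h1, Nat.cast_sub h2,
      Nat.cast_sub (show 1 ≤ a by omega), Nat.cast_sub (show 1 ≤ b by omega),
      Nat.cast_one]
  have hsum : ((∑ u ∈ range (a*b), (a - 1 - u/b) * (b - 1 - u/a) : ℕ):ℝ)
      = ∑ u ∈ range (a*b), (((a - 1 - u/b) * (b - 1 - u/a) : ℕ):ℝ) := by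
    push_cast
    rfl
  rw [hsum, Finset.sum_congr rfl hc]
  have hexp : ∀ u : ℕ, ((a:ℝ) - 1 - ((u/b : ℕ):ℝ)) * ((b:ℝ) - 1 - ((u/a : ℕ):ℝ))
      = ((a:ℝ)-1)*((b:ℝ)-1) - ((a:ℝ)-1)*((u/a : ℕ):ℝ) - ((b:ℝ)-1)*((u/b : ℕ):ℝ)
        + ((u/b : ℕ):ℝ)*((u/a : ℕ):ℝ) := by
    intro u; ring
  rw [Finset.sum_congr rfl fun u _ => hexp u, Finset.sum_add_distrib,
    Finset.sum_sub_distrib, Finset.sum_sub_distrib, Finset.sum_const, Finset.card_range,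
    ← Finset.mul_sum, ← Finset.mul_sum, sum_div_cast ha,
    show ∑ u ∈ range (a*b), ((u/b : ℕ):ℝ) = b*(a:ℝ)*((a:ℝ)-1)/2 from by
      rw [show a*b = b*a from Nat.mul_comm a b]; exact sum_div_cast hb]
  have hSW : (SW a b : ℝ) = ∑ u ∈ range (a*b), ((u/b : ℕ):ℝ) * ((u/a : ℕ):ℝ) := by
    rw [SW]; push_cast; rfl
  rw [← hSW, nsmul_eq_mul]
  push_cast
  ring

lemma pairR {a b : ℕ} (ha : 0 < a) (hb : 0 < b) (hab : Nat.Coprime a b) :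
    (b:ℝ) * (SA a b : ℝ) + (a:ℝ) * (SA b a : ℝ) + (SW a b : ℝ)
      = (a:ℝ)*(b:ℝ)*((a:ℝ)-1)*((b:ℝ)-1) := by
  have hN := pairN ha hb hab
  rw [min_sum_eq ha hb] at hN
  have hcast := congrArg (Nat.cast : ℕ → ℝ) hN
  rw [Nat.cast_add, Nat.cast_add, Nat.cast_mul, Nat.cast_mul, min_sum_cast ha hb] at hcast
  have hrhs : ((∑ i ∈ Ico 1 a, ∑ j ∈ Ico 1 b, (i*b + j*a) : ℕ):ℝ)
      = (a:ℝ)*(b:ℝ)*((a:ℝ)-1)*((b:ℝ)-1) := by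
    have h0 : ((∑ i ∈ Ico 1 a, ∑ j ∈ Ico 1 b, (i*b + j*a) : ℕ):ℝ)
        = ∑ i ∈ Ico 1 a, ∑ j ∈ Ico 1 b, ((i:ℝ)*(b:ℝ) + (j:ℝ)*(a:ℝ)) := by
      push_cast; rfl
    have hinner : ∀ i : ℕ, ∑ j ∈ Ico 1 b, ((i:ℝ)*(b:ℝ) + (j:ℝ)*(a:ℝ))
        = ((b:ℝ)-1)*(b:ℝ)*(i:ℝ) + ((b:ℝ)*((b:ℝ)-1)/2)*(a:ℝ) := by
      intro i
      rw [Finset.sum_add_distrib, Finset.sum_const, Nat.card_Ico, ← Finset.sum_mul, gauss1',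
        nsmul_eq_mul, Nat.cast_sub (by omega), Nat.cast_one]
      ring
    rw [h0, Finset.sum_congr rfl fun i _ => hinner i, Finset.sum_add_distrib,
      Finset.sum_const, Nat.card_Ico, ← Finset.mul_sum, gauss1', nsmul_eq_mul,
      Nat.cast_sub (by omega), Nat.cast_one]
    ring
  rw [hrhs] at hcast
  linarith [hcast]

end DR

set_option maxHeartbeats 4000000 in
theorem dedekind_rademacher_reciprocity (ν₀ ν₁ ν₂ : ℕ)
    (h₀ : 0 < ν₀) (h₁ : 0 < ν₁) (h₂ : 0 < ν₂)
    (h01 : Nat.Coprime ν₀ ν₁) (h02 : Nat.Coprime ν₀ ν₂) (h12 : Nat.Coprime ν₁ ν₂) :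
    dedekindS ν₁ ν₂ ν₀ + dedekindS ν₀ ν₂ ν₁ + dedekindS ν₁ ν₀ ν₂
      = ((ν₀:ℝ)^2 + (ν₁:ℝ)^2 + (ν₂:ℝ)^2) / (12 * ν₀ * ν₁ * ν₂) - 1/4 := by
  have ha' : (ν₀:ℝ) ≠ 0 := Nat.cast_ne_zero.mpr (by omega)
  have hb' : (ν₁:ℝ) ≠ 0 := Nat.cast_ne_zero.mpr (by omega)
  have hc' : (ν₂:ℝ) ≠ 0 := Nat.cast_ne_zero.mpr (by omega)
  rw [DR.ded_eq ν₀ ν₁ ν₂ h₀ h01.symm h02.symm, DR.ded_eq ν₁ ν₀ ν₂ h₁ h01 h12.symm,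
    DR.ded_eq ν₂ ν₁ ν₀ h₂ h12 h02, DR.Sp_expand ν₀ ν₁ ν₂ h₀, DR.Sp_expand ν₁ ν₀ ν₂ h₁,
    DR.Sp_expand ν₂ ν₁ ν₀ h₂]
  -- substitute the "reflected" SA sums using the pair lemma
  have hW01 := DR.SW_closed h01 h₀ h₁
  have hW02 := DR.SW_closed h02 h₀ h₂
  have hW12 := DR.SW_closed h12 h₁ h₂
  have hp01 := DR.pairR h₀ h₁ h01
  have hp02 := DR.pairR h₀ h₂ h02
  have hp12 := DR.pairR h₁ h₂ h12
  have hsub10 : (DR.SA ν₁ ν₀ : ℝ)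
      = ((ν₀:ℝ)*(ν₁:ℝ)*((ν₀:ℝ)-1)*((ν₁:ℝ)-1) - (DR.SW ν₀ ν₁ : ℝ)
          - (ν₁:ℝ)*(DR.SA ν₀ ν₁ : ℝ))/(ν₀:ℝ) := by
    field_simp
    linarith [hp01]
  have hsub20 : (DR.SA ν₂ ν₀ : ℝ)
      = ((ν₀:ℝ)*(ν₂:ℝ)*((ν₀:ℝ)-1)*((ν₂:ℝ)-1) - (DR.SW ν₀ ν₂ : ℝ)
          - (ν₂:ℝ)*(DR.SA ν₀ ν₂ : ℝ))/(ν₀:ℝ) := by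
    field_simp
    linarith [hp02]
  have hsub21 : (DR.SA ν₂ ν₁ : ℝ)
      = ((ν₁:ℝ)*(ν₂:ℝ)*((ν₁:ℝ)-1)*((ν₂:ℝ)-1) - (DR.SW ν₁ ν₂ : ℝ)
          - (ν₂:ℝ)*(DR.SA ν₁ ν₂ : ℝ))/(ν₁:ℝ) := by
    field_simp
    linarith [hp12]
  have hWe01 : (DR.SW ν₀ ν₁ : ℝ)
      = (((ν₀:ℝ)*(ν₁:ℝ))*((ν₀:ℝ)*(ν₁:ℝ)-1)*(2*((ν₀:ℝ)*(ν₁:ℝ))-1)/6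
        - ((ν₀:ℝ)^2*((ν₀:ℝ)-1)/2*((ν₁:ℝ)*((ν₁:ℝ)-1)/2) + (ν₁:ℝ)*((ν₀:ℝ)*((ν₀:ℝ)-1)*(2*(ν₀:ℝ)-1)/6))
        - ((ν₁:ℝ)^2*((ν₁:ℝ)-1)/2*((ν₀:ℝ)*((ν₀:ℝ)-1)/2) + (ν₀:ℝ)*((ν₁:ℝ)*((ν₁:ℝ)-1)*(2*(ν₁:ℝ)-1)/6))
        + ((ν₀:ℝ)*((ν₀:ℝ)-1)/2) * ((ν₁:ℝ)*((ν₁:ℝ)-1)/2))/((ν₀:ℝ)*(ν₁:ℝ)) := by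
    rw [eq_div_iff (by positivity)]
    exact hW01
  have hWe02 : (DR.SW ν₀ ν₂ : ℝ)
      = (((ν₀:ℝ)*(ν₂:ℝ))*((ν₀:ℝ)*(ν₂:ℝ)-1)*(2*((ν₀:ℝ)*(ν₂:ℝ))-1)/6
        - ((ν₀:ℝ)^2*((ν₀:ℝ)-1)/2*((ν₂:ℝ)*((ν₂:ℝ)-1)/2) + (ν₂:ℝ)*((ν₀:ℝ)*((ν₀:ℝ)-1)*(2*(ν₀:ℝ)-1)/6))
        - ((ν₂:ℝ)^2*((ν₂:ℝ)-1)/2*((ν₀:ℝ)*((ν₀:ℝ)-1)/2) + (ν₀:ℝ)*((ν₂:ℝ)*((ν₂:ℝ)-1)*(2*(ν₂:ℝ)-1)/6))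
        + ((ν₀:ℝ)*((ν₀:ℝ)-1)/2) * ((ν₂:ℝ)*((ν₂:ℝ)-1)/2))/((ν₀:ℝ)*(ν₂:ℝ)) := by
    rw [eq_div_iff (by positivity)]
    exact hW02
  have hWe12 : (DR.SW ν₁ ν₂ : ℝ)
      = (((ν₁:ℝ)*(ν₂:ℝ))*((ν₁:ℝ)*(ν₂:ℝ)-1)*(2*((ν₁:ℝ)*(ν₂:ℝ))-1)/6
        - ((ν₁:ℝ)^2*((ν₁:ℝ)-1)/2*((ν₂:ℝ)*((ν₂:ℝ)-1)/2) + (ν₂:ℝ)*((ν₁:ℝ)*((ν₁:ℝ)-1)*(2*(ν₁:ℝ)-1)/6))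
        - ((ν₂:ℝ)^2*((ν₂:ℝ)-1)/2*((ν₁:ℝ)*((ν₁:ℝ)-1)/2) + (ν₁:ℝ)*((ν₂:ℝ)*((ν₂:ℝ)-1)*(2*(ν₂:ℝ)-1)/6))
        + ((ν₁:ℝ)*((ν₁:ℝ)-1)/2) * ((ν₂:ℝ)*((ν₂:ℝ)-1)/2))/((ν₁:ℝ)*(ν₂:ℝ)) := by
    rw [eq_div_iff (by positivity)]
    exact hW12
  have hpart := DR.partition h₀ h₁ h₂ h01 h02 h12
  have hsubSN : (DR.SN ν₂ ν₁ ν₀ : ℝ)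
      = ((ν₀:ℝ)-1)*((ν₁:ℝ)-1)*((ν₂:ℝ)-1) - (DR.SN ν₀ ν₁ ν₂ : ℝ) - (DR.SN ν₁ ν₀ ν₂ : ℝ) := by
    have hcast := congrArg (Nat.cast : ℕ → ℝ) hpart
    rw [Nat.cast_add, Nat.cast_add, Nat.cast_mul, Nat.cast_mul,
      Nat.cast_sub h₀, Nat.cast_sub h₁, Nat.cast_sub h₂, Nat.cast_one] at hcast
    linarith
  rw [hsub10, hsub20, hsub21, hsubSN, hWe01, hWe02, hWe12]
  field_simp
  ring
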